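/- (Zograf-type infinite product F_n as a ratio of Selberg zeta functions.) Let n ∈ ℕ with n ≥ 1 and s ∈ ℂ with Re(s) > 2 − n. Then the family over (i, k) ∈ I × {k ∈ ℕ : k ≥ n} given by (1 − exp(−k(ℓ i + i·θ i))·exp(−s·ℓ i)) is multipliable; denoting its product by F_n(s) = ∏_{k ≥ n} R(−2k, s + k), one has Z(−2(n−1), s + n + 1) ≠ 0 and F_n(s) = Z(−2n, s + n) / Z(−2(n−1), s + n + 1). -/

import Mathlib

open Complex Real Filter

set_option maxHeartbeats 1000000

section helpers

private lemma one_sub_ne' {z : ℂ} (h : ‖z‖ < 1) : (1 : ℂ) - z ≠ 0 := by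
  intro hz
  have : z = 1 := by linear_combination -hz
  simp [this] at h

private lemma summable_log_one_sub' {ι : Type*} {w : ι → ℂ} (h : Summable fun i => ‖w i‖) :
    Summable fun i => Complex.log (1 - w i) := by
  refine Summable.of_norm_bounded_eventually (g := fun i => 3/2 * ‖w i‖) (h.mul_left _) ?_
  have h2 : ∀ᶠ i in cofinite, ‖w i‖ < 1/2 :=
    h.tendsto_cofinite_zero.eventually_lt_const (by norm_num)
  filter_upwards [h2] with i hi
  have : ‖Complex.log (1 + (-w i))‖ ≤ 3/2 * ‖-w i‖ :=
    Complex.norm_log_one_add_half_le_self (by simpa using hi.le)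
  simpa [sub_eq_add_neg] using this

private lemma multipliable_one_sub' {ι : Type*} {w : ι → ℂ} (h : Summable fun i => ‖w i‖)
    (h1 : ∀ i, ‖w i‖ < 1) : Multipliable fun i => 1 - w i :=
  Complex.multipliable_of_summable_log (summable_log_one_sub' h)

private lemma tprod_one_sub_ne_zero' {ι : Type*} {w : ι → ℂ} (h : Summable fun i => ‖w i‖)
    (h1 : ∀ i, ‖w i‖ < 1) : (∏' i, (1 - w i)) ≠ 0 := by
  have h2 := Complex.cexp_tsum_eq_tprod (f := fun i => 1 - w i)
    (fun i => one_sub_ne' (h1 i)) (summable_log_one_sub' h)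
  rw [← h2]
  exact Complex.exp_ne_zero _

private lemma aux_pair' (C r : ℝ) (h0 : 0 ≤ r) (h1 : r < 1) :
    (Summable fun y : ℕ × ℕ => C * (r ^ y.1 * r ^ y.2)) ∧
      (∑' y : ℕ × ℕ, C * (r ^ y.1 * r ^ y.2)) = C * ((1 - r)⁻¹ * (1 - r)⁻¹) := by
  have hgeo : Summable fun p : ℕ => r ^ p := summable_geometric_of_lt_one h0 h1
  have hgn : Summable fun p : ℕ => ‖r ^ p‖ := by
    simpa [Real.norm_eq_abs, _root_.abs_of_nonneg h0, _root_.abs_pow] using hgeo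
  have hs : Summable fun y : ℕ × ℕ => r ^ y.1 * r ^ y.2 :=
    hgeo.mul_of_nonneg hgeo (fun p => pow_nonneg h0 p) (fun q => pow_nonneg h0 q)
  refine ⟨hs.mul_left C, ?_⟩
  rw [tsum_mul_left]
  congr 1
  rw [← tsum_mul_tsum_of_summable_norm hgn hgn, tsum_geometric_of_lt_one h0 h1]

private lemma outer_bound' {I : Type*} (ℓ : I → ℝ) (hℓ : ∀ i, 0 < ℓ i)
    (δ' a : ℝ) (hδ'a : δ' ≤ a)
    (hsum' : Summable fun i => Real.exp (-δ' * ℓ i))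
    (hcof : ∀ᶠ i in cofinite, 1 ≤ ℓ i) :
    Summable fun i =>
      Real.exp (-a * ℓ i) * ((1 - Real.exp (-ℓ i))⁻¹ * (1 - Real.exp (-ℓ i))⁻¹) := by
  have hB : (0:ℝ) < 1 - Real.exp (-1) := by
    have : Real.exp (-1) < 1 := Real.exp_lt_one_iff.2 (by norm_num)
    linarith
  refine Summable.of_norm_bounded_eventually
    (g := fun i => ((1 - Real.exp (-1))⁻¹ * (1 - Real.exp (-1))⁻¹) * Real.exp (-δ' * ℓ i))
    (hsum'.mul_left _) ?_
  filter_upwards [hcof] with i hi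
  have hri : (0:ℝ) < 1 - Real.exp (-ℓ i) := by
    have : Real.exp (-ℓ i) < 1 := Real.exp_lt_one_iff.2 (by linarith [hℓ i])
    linarith
  have e1 : Real.exp (-a * ℓ i) ≤ Real.exp (-δ' * ℓ i) :=
    Real.exp_le_exp.2 (by nlinarith [hℓ i])
  have e2 : (1 - Real.exp (-ℓ i))⁻¹ ≤ (1 - Real.exp (-1))⁻¹ := by
    apply inv_anti₀ hB
    have : Real.exp (-ℓ i) ≤ Real.exp (-1) := Real.exp_le_exp.2 (by linarith)
    linarith
  have hnn : (0:ℝ) ≤ (1 - Real.exp (-ℓ i))⁻¹ := (inv_pos.2 hri).le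
  rw [Real.norm_of_nonneg (by positivity)]
  calc Real.exp (-a * ℓ i) * ((1 - Real.exp (-ℓ i))⁻¹ * (1 - Real.exp (-ℓ i))⁻¹)
      ≤ Real.exp (-δ' * ℓ i) * ((1 - Real.exp (-1))⁻¹ * (1 - Real.exp (-1))⁻¹) := by
        refine mul_le_mul e1 (mul_le_mul e2 e2 hnn (by positivity)) (by positivity)
          (Real.exp_pos _).le
    _ = ((1 - Real.exp (-1))⁻¹ * (1 - Real.exp (-1))⁻¹) * Real.exp (-δ' * ℓ i) := by ring

private lemma core_summable' {I : Type*} (ℓ : I → ℝ)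
    (hℓ : ∀ i, 0 < ℓ i) (δ : ℝ) (hδ : δ < 2)
    (hsum : Summable fun i => Real.exp (-δ * ℓ i))
    (a : ℝ) (ha : 2 < a) :
    Summable fun x : I × ℕ × ℕ =>
      Real.exp (-(((x.2.1 : ℝ) + (x.2.2 : ℝ)) + a) * ℓ x.1) := by
  set δ' : ℝ := max δ (3/2) with hδ'def
  have hδ'2 : δ' < 2 := max_lt hδ (by norm_num)
  have hδ'pos : (0:ℝ) < δ' := lt_of_lt_of_le (by norm_num) (le_max_right _ _)
  have hδ'a : δ' ≤ a := (hδ'2.trans ha).le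
  have hsum' : Summable fun i => Real.exp (-δ' * ℓ i) := by
    refine Summable.of_nonneg_of_le (fun i => (Real.exp_pos _).le)
      (fun i => Real.exp_le_exp.2 ?_) hsum
    nlinarith [(hℓ i).le, le_max_left δ (3/2)]
  have hcof : ∀ᶠ i in cofinite, 1 ≤ ℓ i := by
    have h2 : ∀ᶠ i in cofinite, Real.exp (-δ' * ℓ i) < Real.exp (-δ') :=
      hsum'.tendsto_cofinite_zero.eventually_lt_const (Real.exp_pos _)
    filter_upwards [h2] with i hi
    have := Real.exp_lt_exp.1 hi
    nlinarith
  have hr0 : ∀ i, (0:ℝ) ≤ Real.exp (-ℓ i) := fun i => (Real.exp_pos _).le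
  have hr1 : ∀ i, Real.exp (-ℓ i) < 1 := fun i =>
    Real.exp_lt_one_iff.2 (by linarith [hℓ i])
  have hmain : Summable fun x : I × ℕ × ℕ =>
      Real.exp (-a * ℓ x.1) * (Real.exp (-ℓ x.1) ^ x.2.1 * Real.exp (-ℓ x.1) ^ x.2.2) := by
    refine (summable_prod_of_nonneg (fun x => by positivity)).2 ⟨fun i => ?_, ?_⟩
    · simpa using (aux_pair' (Real.exp (-a * ℓ i)) _ (hr0 i) (hr1 i)).1
    · refine Summable.congr (f := fun i => Real.exp (-a * ℓ i) *
        ((1 - Real.exp (-ℓ i))⁻¹ * (1 - Real.exp (-ℓ i))⁻¹)) ?_ ?_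
      · exact outer_bound' ℓ hℓ δ' a hδ'a hsum' hcof
      · exact fun i => by
          simpa using ((aux_pair' (Real.exp (-a * ℓ i)) _ (hr0 i) (hr1 i)).2).symm
  refine hmain.congr fun x => ?_
  rw [← Real.exp_nat_mul, ← Real.exp_nat_mul, ← Real.exp_add, ← Real.exp_add]
  ring_nf

/-- The main inner term. -/
private noncomputable def Vt {I : Type*} (ℓ θ : I → ℝ) (n : ℕ) (s : ℂ)
    (x : (I × ℕ) × ℕ) : ℂ :=
  Complex.exp (-((x.1.2 : ℂ) + (n : ℂ)) * ((ℓ x.1.1 : ℂ) + Complex.I * (θ x.1.1 : ℂ)))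
    * Complex.exp (-(x.2 : ℂ) * ((ℓ x.1.1 : ℂ) - Complex.I * (θ x.1.1 : ℂ)))
    * Complex.exp (-s * (ℓ x.1.1 : ℂ))

private lemma norm_Vt {I : Type*} (ℓ θ : I → ℝ) (n : ℕ) (s : ℂ) (x : (I × ℕ) × ℕ) :
    ‖Vt ℓ θ n s x‖
      = Real.exp (-(((x.1.2 : ℝ) + (x.2 : ℝ)) + ((n : ℝ) + s.re)) * ℓ x.1.1) := by
  unfold Vt
  simp only [norm_mul, Complex.norm_exp, ← Real.exp_add]
  congr 1
  simp [Complex.mul_re, Complex.add_re, Complex.sub_re, Complex.mul_im, Complex.neg_re]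
  ring

end helpers

/-- `R(σ_k, s) = ∏_{i ∈ I} (1 − e^{i(k/2)θ_i} e^{−s ℓ_i})`. -/
noncomputable def Rz {I : Type*} (ℓ θ : I → ℝ) (k : ℤ) (s : ℂ) : ℂ :=
  ∏' i : I, (1 - Complex.exp (Complex.I * ((k : ℂ) / 2) * (θ i : ℂ))
    * Complex.exp (-s * (ℓ i : ℂ)))

/-- Selberg zeta function
`Z(σ_k, s) = ∏_{i ∈ I} ∏_{p,q ≥ 0} (1 − e^{i(k/2)θ_i} e^{−p(ℓ_i+iθ_i)} e^{−q(ℓ_i−iθ_i)} e^{−s ℓ_i})`. -/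
noncomputable def Zs {I : Type*} (ℓ θ : I → ℝ) (k : ℤ) (s : ℂ) : ℂ :=
  ∏' x : I × ℕ × ℕ,
    (1 - Complex.exp (Complex.I * ((k : ℂ) / 2) * (θ x.1 : ℂ))
       * Complex.exp (-(x.2.1 : ℂ) * ((ℓ x.1 : ℂ) + Complex.I * (θ x.1 : ℂ)))
       * Complex.exp (-(x.2.2 : ℂ) * ((ℓ x.1 : ℂ) - Complex.I * (θ x.1 : ℂ)))
       * Complex.exp (-s * (ℓ x.1 : ℂ)))

/-- the Zograf-type product `F_n(s) = ∏_{k ≥ n} R(σ_{−2k}, s+k)` converges for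
`Re(s) > 2 − n` and equals `Z(−2n, s+n) / Z(−2(n−1), s+n+1)`. -/
theorem statement8 {I : Type*} [Countable I] (ℓ θ : I → ℝ)
    (hℓ : ∀ i, 0 < ℓ i) (δ : ℝ) (hδ : δ < 2)
    (hsum : Summable fun i => Real.exp (-δ * ℓ i))
    (n : ℕ) (hn : 1 ≤ n) (s : ℂ) (hs : 2 - (n : ℝ) < s.re) :
    (Multipliable fun x : I × {k : ℕ // n ≤ k} =>
      (1 - Complex.exp (-((x.2 : ℕ) : ℂ) * ((ℓ x.1 : ℂ) + Complex.I * (θ x.1 : ℂ)))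
         * Complex.exp (-s * (ℓ x.1 : ℂ)))) ∧
    Zs ℓ θ (-2 * ((n : ℤ) - 1)) (s + (n : ℂ) + 1) ≠ 0 ∧
    (∏' x : I × {k : ℕ // n ≤ k},
        (1 - Complex.exp (-((x.2 : ℕ) : ℂ) * ((ℓ x.1 : ℂ) + Complex.I * (θ x.1 : ℂ)))
           * Complex.exp (-s * (ℓ x.1 : ℂ)))) =
      Zs ℓ θ (-2 * (n : ℤ)) (s + (n : ℂ)) /
        Zs ℓ θ (-2 * ((n : ℤ) - 1)) (s + (n : ℂ) + 1) := by
  have ha : (2:ℝ) < (n : ℝ) + s.re := by linarith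
  -- norm summability of Vt
  have hV : Summable fun x : (I × ℕ) × ℕ => ‖Vt ℓ θ n s x‖ := by
    have hc := core_summable' ℓ hℓ δ hδ hsum ((n : ℝ) + s.re) ha
    have := ((Equiv.prodAssoc I ℕ ℕ).summable_iff
      (f := fun x : I × ℕ × ℕ =>
        Real.exp (-(((x.2.1 : ℝ) + (x.2.2 : ℝ)) + ((n : ℝ) + s.re)) * ℓ x.1))).2 hc
    exact this.congr fun x => (norm_Vt ℓ θ n s x).symm
  have hVlt : ∀ x : (I × ℕ) × ℕ, ‖Vt ℓ θ n s x‖ < 1 := by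
    intro x
    rw [norm_Vt]
    apply Real.exp_lt_one_iff.2
    have h1 : (0:ℝ) < ((x.1.2 : ℝ) + (x.2 : ℝ)) + ((n : ℝ) + s.re) := by
      have : (0:ℝ) ≤ (x.1.2 : ℝ) := Nat.cast_nonneg _
      have : (0:ℝ) ≤ (x.2 : ℝ) := Nat.cast_nonneg _
      nlinarith [Nat.cast_nonneg (α := ℝ) x.1.2, Nat.cast_nonneg (α := ℝ) x.2]
    nlinarith [hℓ x.1.1]
  -- shifted family
  have hVs : Summable fun x : (I × ℕ) × ℕ => ‖Vt ℓ θ n s (x.1, x.2 + 1)‖ :=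
    hV.comp_injective (i := fun x : (I × ℕ) × ℕ => (x.1, x.2 + 1))
      (fun a b hab => by
        simp only [Prod.mk.injEq] at hab
        exact Prod.ext hab.1 (by omega))
  -- q = 0 family
  have hW : Summable fun b : I × ℕ => ‖Vt ℓ θ n s (b, 0)‖ :=
    hV.comp_injective (i := fun b : I × ℕ => (b, 0))
      (fun a b hab => (Prod.ext_iff.1 hab).1)
  -- multipliability
  have MG : Multipliable fun x : (I × ℕ) × ℕ => 1 - Vt ℓ θ n s x :=
    multipliable_one_sub' hV hVlt
  have Mfib : ∀ b : I × ℕ, Multipliable fun q : ℕ => 1 - Vt ℓ θ n s (b, q) := fun b =>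
    multipliable_one_sub'
      (hV.comp_injective (i := fun q : ℕ => (b, q)) (fun a b hab => by
        simpa using hab))
      (fun q => hVlt _)
  have MGs : Multipliable fun x : (I × ℕ) × ℕ => 1 - Vt ℓ θ n s (x.1, x.2 + 1) :=
    multipliable_one_sub' hVs (fun x => hVlt _)
  have Mfibs : ∀ b : I × ℕ, Multipliable fun q : ℕ => 1 - Vt ℓ θ n s (b, q + 1) := fun b =>
    multipliable_one_sub'
      (hV.comp_injective (i := fun q : ℕ => (b, q + 1)) (fun a b hab => by
        simpa using hab))
      (fun q => hVlt _)
  have Mg : Multipliable fun b : I × ℕ => 1 - Vt ℓ θ n s (b, 0) :=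
    multipliable_one_sub' hW (fun b => hVlt _)
  have Mmarg : Multipliable fun b : I × ℕ => ∏' q : ℕ, (1 - Vt ℓ θ n s (b, q + 1)) :=
    (MGs.hasProd.prod_fiberwise (fun b => (Mfibs b).hasProd)).multipliable
  have ZSne : (∏' x : (I × ℕ) × ℕ, (1 - Vt ℓ θ n s (x.1, x.2 + 1))) ≠ 0 :=
    tprod_one_sub_ne_zero' hVs (fun x => hVlt _)
  -- splitting
  have S1 : (∏' x : (I × ℕ) × ℕ, (1 - Vt ℓ θ n s x))
      = ∏' b : I × ℕ, ∏' q : ℕ, (1 - Vt ℓ θ n s (b, q)) := MG.tprod_prod' Mfib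
  have S2 : ∀ b : I × ℕ, (∏' q : ℕ, (1 - Vt ℓ θ n s (b, q)))
      = (1 - Vt ℓ θ n s (b, 0)) * ∏' q : ℕ, (1 - Vt ℓ θ n s (b, q + 1)) := fun b =>
    tprod_eq_zero_mul' (Mfibs b)
  have S3 : (∏' b : I × ℕ, ((1 - Vt ℓ θ n s (b, 0)) * ∏' q : ℕ, (1 - Vt ℓ θ n s (b, q + 1))))
      = (∏' b : I × ℕ, (1 - Vt ℓ θ n s (b, 0)))
        * ∏' b : I × ℕ, ∏' q : ℕ, (1 - Vt ℓ θ n s (b, q + 1)) := Mg.tprod_mul Mmarg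
  have S4 : (∏' b : I × ℕ, ∏' q : ℕ, (1 - Vt ℓ θ n s (b, q + 1)))
      = ∏' x : (I × ℕ) × ℕ, (1 - Vt ℓ θ n s (x.1, x.2 + 1)) := (MGs.tprod_prod' Mfibs).symm
  have Split : (∏' x : (I × ℕ) × ℕ, (1 - Vt ℓ θ n s x))
      = (∏' b : I × ℕ, (1 - Vt ℓ θ n s (b, 0)))
        * ∏' x : (I × ℕ) × ℕ, (1 - Vt ℓ θ n s (x.1, x.2 + 1)) := by
    rw [S1, tprod_congr S2, S3, S4]
  -- identification of Zs with the Vt products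
  have E1 : Zs ℓ θ (-2 * (n : ℤ)) (s + (n : ℂ))
      = ∏' x : (I × ℕ) × ℕ, (1 - Vt ℓ θ n s x) := by
    unfold Zs
    rw [← (Equiv.prodAssoc I ℕ ℕ).tprod_eq]
    refine tprod_congr fun x => ?_
    unfold Vt
    rw [mul_assoc, mul_assoc, ← Complex.exp_add, ← Complex.exp_add, ← Complex.exp_add,
      mul_assoc, ← Complex.exp_add, ← Complex.exp_add]
    congr 2
    simp only [Equiv.prodAssoc_apply]
    push_cast
    ring
  have E2 : Zs ℓ θ (-2 * ((n : ℤ) - 1)) (s + (n : ℂ) + 1)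
      = ∏' x : (I × ℕ) × ℕ, (1 - Vt ℓ θ n s (x.1, x.2 + 1)) := by
    unfold Zs
    rw [← (Equiv.prodAssoc I ℕ ℕ).tprod_eq]
    refine tprod_congr fun x => ?_
    unfold Vt
    rw [mul_assoc, mul_assoc, ← Complex.exp_add, ← Complex.exp_add, ← Complex.exp_add,
      mul_assoc, ← Complex.exp_add, ← Complex.exp_add]
    congr 2
    simp only [Equiv.prodAssoc_apply]
    push_cast
    ring
  -- identification of the F-family with the q = 0 family
  let e2 : I × ℕ ≃ I × {k : ℕ // n ≤ k} :=
    { toFun := fun b => (b.1, ⟨b.2 + n, Nat.le_add_left n b.2⟩)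
      invFun := fun x => (x.1, (x.2 : ℕ) - n)
      left_inv := fun b => by simp
      right_inv := fun x => by
        ext
        · rfl
        · simp [Nat.sub_add_cancel x.2.2] }
  have Eterm : ∀ b : I × ℕ,
      (1 - Complex.exp (-(((e2 b).2 : ℕ) : ℂ) * ((ℓ (e2 b).1 : ℂ) + Complex.I * (θ (e2 b).1 : ℂ)))
         * Complex.exp (-s * (ℓ (e2 b).1 : ℂ)))
      = 1 - Vt ℓ θ n s (b, 0) := by
    intro b
    unfold Vt
    simp only [e2, Equiv.coe_fn_mk]
    rw [show (-((0:ℕ) : ℂ) * ((ℓ b.1 : ℂ) - Complex.I * (θ b.1 : ℂ))) = 0 by simp,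
      Complex.exp_zero, mul_one]
    congr 3
    push_cast
    ring
  have E3 : (∏' x : I × {k : ℕ // n ≤ k},
      (1 - Complex.exp (-((x.2 : ℕ) : ℂ) * ((ℓ x.1 : ℂ) + Complex.I * (θ x.1 : ℂ)))
         * Complex.exp (-s * (ℓ x.1 : ℂ))))
      = ∏' b : I × ℕ, (1 - Vt ℓ θ n s (b, 0)) := by
    rw [← e2.tprod_eq]
    exact tprod_congr Eterm
  have Mult : Multipliable fun x : I × {k : ℕ // n ≤ k} =>
      (1 - Complex.exp (-((x.2 : ℕ) : ℂ) * ((ℓ x.1 : ℂ) + Complex.I * (θ x.1 : ℂ)))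
         * Complex.exp (-s * (ℓ x.1 : ℂ))) := by
    rw [← e2.multipliable_iff]
    exact Mg.congr fun b => (Eterm b).symm
  refine ⟨Mult, ?_, ?_⟩
  · rw [E2]; exact ZSne
  · rw [E3, E1, E2, Split, mul_div_assoc, div_self ZSne, mul_one]
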